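/- For every sequence S over F_q and every N ≥ 2, the N-th expansion complexity satisfies E_N(S) ≤ min{⌊(N+3)/2⌋, N − 1}. -/

import Mathlib

/-- The `N`-th linear complexity of a sequence `s` over a field: the length of a
shortest linear recurrence satisfied by the first `N` terms. -/
noncomputable def linComplexityN {F : Type*} [Field F] (s : ℕ → F) (N : ℕ) : ℕ :=
  sInf {L | ∃ c : Fin L → F, ∀ i, i + L < N →
    s (i + L) + ∑ ℓ : Fin L, c ℓ * s (i + ℓ.1) = 0}

open Classical in
/-- The `N`-th expansion complexity of a sequence `s` over a field: `0` if the first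
`N` terms vanish, otherwise the least total degree of a nonzero bivariate polynomial
`h(x,y)` with `h(x, G(x)) ≡ 0 mod x^N`, where `G` is the generating function of `s`. -/
noncomputable def expComplexityN {F : Type*} [Field F] (s : ℕ → F) (N : ℕ) : ℕ :=
  if ∀ i < N, s i = 0 then 0 else
  sInf {d | ∃ h : MvPolynomial (Fin 2) F, h ≠ 0 ∧ h.totalDegree = d ∧
    (PowerSeries.X : PowerSeries F) ^ N ∣
      MvPolynomial.aeval ![(PowerSeries.X : PowerSeries F), PowerSeries.mk s] h}

section Aux
variable {F : Type*} [Field F]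

noncomputable def polAux (m : ℕ) (c : Fin m → F) : Polynomial F :=
  ∑ i : Fin m, Polynomial.C (c i) * Polynomial.X ^ (i : ℕ)

noncomputable def mvAux (m : ℕ) (c : Fin m → F) : MvPolynomial (Fin 2) F :=
  ∑ i : Fin m, MvPolynomial.C (c i) * MvPolynomial.X 0 ^ (i : ℕ)

lemma polAux_coeff (m : ℕ) (c : Fin m → F) (k : Fin m) : (polAux m c).coeff k = c k := by
  simp [polAux, Polynomial.finset_sum_coeff, Polynomial.coeff_C_mul, Polynomial.coeff_X_pow,
    Fin.val_inj]

lemma mvAux_aeval {A : Type*} [CommRing A] [Algebra F A] (x y : A) (m : ℕ) (c : Fin m → F) :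
    MvPolynomial.aeval ![x, y] (mvAux m c) = ∑ i : Fin m, algebraMap F A (c i) * x ^ (i : ℕ) := by
  simp [mvAux]

lemma mvAux_aeval_pol (y : Polynomial F) (m : ℕ) (c : Fin m → F) :
    MvPolynomial.aeval ![Polynomial.X, y] (mvAux m c) = polAux m c := by
  rw [mvAux_aeval]
  simp [polAux, Polynomial.algebraMap_eq]

lemma mvAux_sub (m : ℕ) (c c' : Fin m → F) : mvAux m (c - c') = mvAux m c - mvAux m c' := by
  simp [mvAux, sub_mul, Finset.sum_sub_distrib]

lemma mvAux_totalDegree (m : ℕ) (c : Fin m → F) : (mvAux m c).totalDegree ≤ m - 1 := by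
  refine (MvPolynomial.totalDegree_finset_sum _ _).trans ?_
  refine Finset.sup_le fun i _ => ?_
  refine (MvPolynomial.totalDegree_mul _ _).trans ?_
  simp only [MvPolynomial.totalDegree_C, zero_add]
  refine (MvPolynomial.totalDegree_pow _ _).trans ?_
  simp [MvPolynomial.totalDegree_X]
  omega

end Aux

lemma polAux_eq_zero {F : Type*} [Field F] {m : ℕ} {c : Fin m → F}
    (h : polAux m c = 0) : c = 0 := by
  funext k
  have := polAux_coeff m c k
  rw [h] at this
  simpa using this.symm

theorem expComplexityN_trivial_upper_bound {F : Type*} [Field F] [Fintype F]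
    (s : ℕ → F) (N : ℕ) (hN : 2 ≤ N) :
    expComplexityN s N ≤ min ((N + 3) / 2) (N - 1) := by
  classical
  rw [expComplexityN]
  split_ifs with h0
  · exact Nat.zero_le _
  set d : ℕ := (N + 1) / 2 with hd
  set env : Fin 2 → PowerSeries F := ![(PowerSeries.X : PowerSeries F), PowerSeries.mk s]
    with henv
  set H : ((Fin (d+1) → F) × (Fin d → F)) → MvPolynomial (Fin 2) F :=
    fun p => mvAux (d+1) p.1 + MvPolynomial.X 1 * mvAux d p.2 with hH
  set φ : ((Fin (d+1) → F) × (Fin d → F)) → (Fin N → F) :=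
    fun p n => PowerSeries.coeff (R := F) n (MvPolynomial.aeval env (H p)) with hφ
  have hcard : Fintype.card (Fin N → F) < Fintype.card ((Fin (d+1) → F) × (Fin d → F)) := by
    have hq : 1 < Fintype.card F := Fintype.one_lt_card
    rw [Fintype.card_prod, Fintype.card_fun, Fintype.card_fun, Fintype.card_fun, ← pow_add]
    simp only [Fintype.card_fin]
    exact Nat.pow_lt_pow_right hq (by omega)
  obtain ⟨p, p', hpp, hfeq⟩ := Fintype.exists_ne_map_eq_of_card_lt φ hcard
  set a : Fin (d+1) → F := p.1 - p'.1 with ha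
  set b : Fin d → F := p.2 - p'.2 with hb
  set h : MvPolynomial (Fin 2) F := mvAux (d+1) a + MvPolynomial.X 1 * mvAux d b with hh
  have hHsub : h = H p - H p' := by
    simp only [hh, hH, ha, hb, mvAux_sub, mul_sub]
    ring
  have hne : h ≠ 0 := by
    intro hz
    have e0 : MvPolynomial.aeval ![Polynomial.X, (0 : Polynomial F)] h = 0 := by rw [hz]; simp
    have e1 : MvPolynomial.aeval ![Polynomial.X, (1 : Polynomial F)] h = 0 := by rw [hz]; simp
    rw [hh] at e0 e1
    simp only [map_add, map_mul, MvPolynomial.aeval_X, mvAux_aeval_pol,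
      Matrix.cons_val_one, Matrix.head_cons, Matrix.cons_val_zero, zero_mul, one_mul, add_zero] at e0 e1
    have ha0 : a = 0 := polAux_eq_zero e0
    rw [e0, zero_add] at e1
    have hb0 : b = 0 := polAux_eq_zero e1
    apply hpp
    have h1 : p.1 = p'.1 := by rwa [ha, sub_eq_zero] at ha0
    have h2 : p.2 = p'.2 := by rwa [hb, sub_eq_zero] at hb0
    exact Prod.ext h1 h2
  have hdvd : (PowerSeries.X : PowerSeries F) ^ N ∣ MvPolynomial.aeval env h := by
    rw [PowerSeries.X_pow_dvd_iff]
    intro n hn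
    have hc := congrFun hfeq (⟨n, hn⟩ : Fin N)
    simp only [hφ] at hc
    rw [hHsub, map_sub, map_sub, hc, sub_self]
  have hdeg : h.totalDegree ≤ d := by
    rw [hh]
    refine (MvPolynomial.totalDegree_add _ _).trans (max_le ?_ ?_)
    · exact (mvAux_totalDegree _ _).trans (by omega)
    · refine (MvPolynomial.totalDegree_mul _ _).trans ?_
      have h1 := mvAux_totalDegree d b
      have h2 : (MvPolynomial.X 1 : MvPolynomial (Fin 2) F).totalDegree = 1 :=
        MvPolynomial.totalDegree_X 1
      omega
  calc sInf {e | ∃ h' : MvPolynomial (Fin 2) F, h' ≠ 0 ∧ h'.totalDegree = e ∧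
        (PowerSeries.X : PowerSeries F) ^ N ∣ MvPolynomial.aeval env h'}
      ≤ h.totalDegree := Nat.sInf_le ⟨h, hne, rfl, hdvd⟩
    _ ≤ d := hdeg
    _ ≤ min ((N + 3) / 2) (N - 1) := by omega
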